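/- Let μ be a fixed single-hidden-layer logistic feedforward network on [0,1]^p with k hidden nodes and parameter vector (θ₁, …, θ_d), d = (p+2)k + 1, extended by θ_i = 0 for i > d. Let 0 < a < 1. Then there exists N (depending only on μ, p, a) such that for all n ≥ N, every ς > 0, every k̃ ≤ n^a, and every network μ̃ with k̃ hidden nodes and parameters (θ̃₁, …, θ̃_{d̃}), d̃ = (p+2)k̃ + 1 (extended by zeros), satisfying |θ_i − θ̃_i| ≤ ς for all i: sup_{x ∈ [0,1]^p} (μ̃(x) − μ(x))² ≤ (5 n^a)² ς². -/

import Mathlib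

open Real

noncomputable section

/-- The unit cube `[0,1]^p`. -/
def unitCube (p : ℕ) : Set (Fin p → ℝ) := Set.univ.pi fun _ => Set.Icc 0 1

/-- A single-hidden-layer logistic feedforward network with `k` hidden nodes, output
weights `β₀, β₁, …` and input weights `γ_{jh}`, with the parameter sequence extended by
zeros beyond the existing nodes. -/
def nnFunSeq (p k : ℕ) (β : ℕ → ℝ) (γ : ℕ → Fin (p + 1) → ℝ) (x : Fin p → ℝ) : ℝ :=
  β 0 + ∑ j ∈ Finset.range k, β (j + 1) *
    (1 + Real.exp (-(γ j 0 + ∑ h : Fin p, γ j h.succ * x h)))⁻¹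

lemma logistic_lipschitz (u v : ℝ) :
    |(1 + Real.exp (-u))⁻¹ - (1 + Real.exp (-v))⁻¹| ≤ |u - v| := by
  wlog h : u ≤ v with H
  · rw [abs_sub_comm, abs_sub_comm u v]; exact H v u (le_of_not_ge h)
  have hu := Real.exp_pos (-u)
  have hv := Real.exp_pos (-v)
  have hw := Real.exp_pos (v - u)
  have hmul : Real.exp (-v) * Real.exp (v - u) = Real.exp (-u) := by
    rw [← Real.exp_add]; ring_nf
  have hprod : Real.exp (-(v - u)) * Real.exp (v - u) = 1 := by
    rw [← Real.exp_add]; simp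
  have h2 : (1 - (v - u)) * Real.exp (v - u) ≤ 1 := by
    have h1 := Real.add_one_le_exp (-(v - u))
    nlinarith
  have key : Real.exp (-u) - Real.exp (-v) ≤ (v - u) * Real.exp (-u) := by
    nlinarith
  have hle : (1 + Real.exp (-v))⁻¹ - (1 + Real.exp (-u))⁻¹
      = (Real.exp (-u) - Real.exp (-v)) / ((1 + Real.exp (-u)) * (1 + Real.exp (-v))) := by
    rw [inv_sub_inv (by positivity) (by positivity)]
    congr 1 <;> ring
  have hmono : (1 + Real.exp (-u))⁻¹ ≤ (1 + Real.exp (-v))⁻¹ := by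
    apply inv_anti₀ (by linarith)
    have : Real.exp (-v) ≤ Real.exp (-u) := Real.exp_le_exp.2 (by linarith)
    linarith
  have habs2 : |u - v| = v - u := by rw [abs_sub_comm]; exact abs_of_nonneg (by linarith)
  rw [abs_sub_comm, abs_of_nonneg (by linarith), habs2, hle, div_le_iff₀ (by positivity)]
  nlinarith [mul_nonneg (by linarith : (0:ℝ) ≤ v - u) (by positivity : (0:ℝ) ≤ 1 + Real.exp (-v) + Real.exp (-u) * Real.exp (-v))]

lemma logistic_mem (u : ℝ) : 0 ≤ (1 + Real.exp (-u))⁻¹ ∧ (1 + Real.exp (-u))⁻¹ ≤ 1 := by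
  have h := Real.exp_pos (-u)
  constructor
  · positivity
  · rw [inv_le_one_iff₀]; right; linarith

/-- Perturbation bound for neural networks (Lee's Lemma 6): for a fixed network `μ` with
`k` nodes (parameters extended by zero) there is `N` such that for all `n ≥ N`, any
`ς > 0`, and any network `μ̃` with `k̃ ≤ n^a` nodes whose (zero-extended) parameters are
within `ς` of those of `μ` coordinatewise, `sup_{x ∈ [0,1]^p} (μ̃(x) − μ(x))² ≤ (5n^a)²ς²`. -/
theorem nn_perturbation_sup_bound (p k : ℕ) (a : ℝ) (ha : 0 < a) (ha1 : a < 1)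
    (β : ℕ → ℝ) (γ : ℕ → Fin (p + 1) → ℝ)
    (hβ0 : ∀ j, k < j → β j = 0) (hγ0 : ∀ j, k ≤ j → γ j = 0) :
    ∃ N : ℕ, ∀ n ≥ N, ∀ ς > (0 : ℝ), ∀ kt : ℕ, (kt : ℝ) ≤ (n : ℝ) ^ a →
      ∀ (βt : ℕ → ℝ) (γt : ℕ → Fin (p + 1) → ℝ),
        (∀ j, kt < j → βt j = 0) → (∀ j, kt ≤ j → γt j = 0) →
        (∀ j, |β j - βt j| ≤ ς) → (∀ j h, |γ j h - γt j h| ≤ ς) →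
        ∀ x ∈ unitCube p,
          (nnFunSeq p kt βt γt x - nnFunSeq p k β γ x) ^ 2
            ≤ (5 * (n : ℝ) ^ a) ^ 2 * ς ^ 2 := by
  classical
  set B : ℝ := ∑ j ∈ Finset.range k, |β (j + 1)| with hBdef
  have hBnn : 0 ≤ B := Finset.sum_nonneg fun _ _ => abs_nonneg _
  set C : ℝ := max (k : ℝ) (1 + ((p : ℝ) + 1) * B) with hCdef
  have htend : Filter.Tendsto (fun n : ℕ => (n : ℝ) ^ a) Filter.atTop Filter.atTop :=
    (tendsto_rpow_atTop ha).comp tendsto_natCast_atTop_atTop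
  obtain ⟨N, hN⟩ := Filter.eventually_atTop.1 (htend.eventually_ge_atTop C)
  refine ⟨N, fun n hn ς hς kt hkt βt γt hβt0 hγt0 hβς hγς x hx => ?_⟩
  have hna : C ≤ (n : ℝ) ^ a := hN n hn
  have hk_le : (k : ℝ) ≤ (n : ℝ) ^ a := le_trans (le_max_left _ _) hna
  have hB_le : 1 + ((p : ℝ) + 1) * B ≤ (n : ℝ) ^ a := le_trans (le_max_right _ _) hna
  have hna_pos : (0 : ℝ) < (n : ℝ) ^ a := lt_of_lt_of_le (by positivity) hB_le
  set M := max k kt with hMdef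
  have hxIcc : ∀ h : Fin p, x h ∈ Set.Icc (0 : ℝ) 1 := fun h => hx h (Set.mem_univ h)
  -- extend sums to range M
  set σ : ℕ → ℝ := fun j => (1 + Real.exp (-(γ j 0 + ∑ h : Fin p, γ j h.succ * x h)))⁻¹ with hσ
  set σt : ℕ → ℝ := fun j => (1 + Real.exp (-(γt j 0 + ∑ h : Fin p, γt j h.succ * x h)))⁻¹ with hσt
  have e1 : nnFunSeq p k β γ x = β 0 + ∑ j ∈ Finset.range M, β (j + 1) * σ j := by
    unfold nnFunSeq
    congr 1
    exact Finset.sum_subset (Finset.range_subset_range.2 (le_max_left _ _))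
      (fun j _ hj => by rw [hβ0 (j + 1) (by simp at hj; omega), zero_mul])
  have e2 : nnFunSeq p kt βt γt x = βt 0 + ∑ j ∈ Finset.range M, βt (j + 1) * σt j := by
    unfold nnFunSeq
    congr 1
    exact Finset.sum_subset (Finset.range_subset_range.2 (le_max_right _ _))
      (fun j _ hj => by
        rw [hβt0 (j + 1) (by simp at hj; omega), zero_mul])
  -- per-term bound
  have hterm : ∀ j ∈ Finset.range M,
      |βt (j + 1) * σt j - β (j + 1) * σ j| ≤ ς + |β (j + 1)| * (((p : ℝ) + 1) * ς) := by
    intro j _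
    have hσt1 : 0 ≤ σt j ∧ σt j ≤ 1 :=
      logistic_mem (γt j 0 + ∑ h : Fin p, γt j h.succ * x h)
    have harg : |(γ j 0 + ∑ h : Fin p, γ j h.succ * x h) -
        (γt j 0 + ∑ h : Fin p, γt j h.succ * x h)| ≤ ((p : ℝ) + 1) * ς := by
      have hsum : (∑ h : Fin p, (γ j h.succ - γt j h.succ) * x h)
          = (∑ h : Fin p, γ j h.succ * x h) - ∑ h : Fin p, γt j h.succ * x h := by
        rw [← Finset.sum_sub_distrib]
        exact Finset.sum_congr rfl fun h _ => by ring
      have hrw : (γ j 0 + ∑ h : Fin p, γ j h.succ * x h) -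
          (γt j 0 + ∑ h : Fin p, γt j h.succ * x h)
          = (γ j 0 - γt j 0) + ∑ h : Fin p, (γ j h.succ - γt j h.succ) * x h := by
        rw [hsum]; ring
      rw [hrw]
      calc |(γ j 0 - γt j 0) + ∑ h : Fin p, (γ j h.succ - γt j h.succ) * x h|
          ≤ |γ j 0 - γt j 0| + |∑ h : Fin p, (γ j h.succ - γt j h.succ) * x h| := abs_add_le _ _
        _ ≤ ς + ∑ h : Fin p, |(γ j h.succ - γt j h.succ) * x h| :=
            add_le_add (hγς j 0) (Finset.abs_sum_le_sum_abs _ _)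
        _ ≤ ς + ∑ h : Fin p, ς := by
            apply add_le_add le_rfl
            apply Finset.sum_le_sum
            intro h _
            rw [abs_mul]
            calc |γ j h.succ - γt j h.succ| * |x h| ≤ ς * 1 := by
                  apply mul_le_mul (hγς j h.succ) ?_ (abs_nonneg _) (le_of_lt hς)
                  rw [abs_le]
                  exact ⟨by linarith [(hxIcc h).1], (hxIcc h).2⟩
              _ = ς := mul_one ς
        _ = ((p : ℝ) + 1) * ς := by simp [Finset.sum_const]; ring
    have hσdiff : |σ j - σt j| ≤ ((p : ℝ) + 1) * ς :=
      le_trans (logistic_lipschitz (γ j 0 + ∑ h : Fin p, γ j h.succ * x h)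
        (γt j 0 + ∑ h : Fin p, γt j h.succ * x h)) harg
    have hb1 : |βt (j + 1) - β (j + 1)| ≤ ς := by rw [abs_sub_comm]; exact hβς (j + 1)
    have hσabs : |σt j| ≤ 1 := by rw [abs_of_nonneg hσt1.1]; exact hσt1.2
    have hb2 : |(βt (j + 1) - β (j + 1)) * σt j| ≤ ς := by
      rw [abs_mul]
      calc |βt (j + 1) - β (j + 1)| * |σt j| ≤ ς * 1 :=
            mul_le_mul hb1 hσabs (abs_nonneg _) (le_of_lt hς)
        _ = ς := mul_one ς
    have hb3 : |β (j + 1) * (σt j - σ j)| ≤ |β (j + 1)| * (((p : ℝ) + 1) * ς) := by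
      rw [abs_mul]
      exact mul_le_mul_of_nonneg_left (by rw [abs_sub_comm]; exact hσdiff) (abs_nonneg _)
    have hsplit : βt (j + 1) * σt j - β (j + 1) * σ j
        = (βt (j + 1) - β (j + 1)) * σt j + β (j + 1) * (σt j - σ j) := by ring
    rw [hsplit]
    exact le_trans (abs_add_le _ _) (add_le_add hb2 hb3)
  -- sum of |β (j+1)| over range M equals B
  have hBsum : ∑ j ∈ Finset.range M, |β (j + 1)| = B := by
    rw [hBdef]
    symm
    exact Finset.sum_subset (Finset.range_subset_range.2 (le_max_left _ _))
      (fun j _ hj => by rw [hβ0 (j + 1) (by simp at hj; omega)]; simp)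
  have habs : |nnFunSeq p kt βt γt x - nnFunSeq p k β γ x|
      ≤ ς * (1 + (M : ℝ) + ((p : ℝ) + 1) * B) := by
    rw [e1, e2]
    have hrw : (βt 0 + ∑ j ∈ Finset.range M, βt (j + 1) * σt j) -
        (β 0 + ∑ j ∈ Finset.range M, β (j + 1) * σ j)
        = (βt 0 - β 0) + ∑ j ∈ Finset.range M, (βt (j + 1) * σt j - β (j + 1) * σ j) := by
      rw [Finset.sum_sub_distrib]; ring
    rw [hrw]
    calc |(βt 0 - β 0) + ∑ j ∈ Finset.range M, (βt (j + 1) * σt j - β (j + 1) * σ j)|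
        ≤ |βt 0 - β 0| + ∑ j ∈ Finset.range M, |βt (j + 1) * σt j - β (j + 1) * σ j| :=
          le_trans (abs_add_le _ _) (add_le_add le_rfl (Finset.abs_sum_le_sum_abs _ _))
      _ ≤ ς + ∑ j ∈ Finset.range M, (ς + |β (j + 1)| * (((p : ℝ) + 1) * ς)) :=
          add_le_add (by rw [abs_sub_comm]; exact hβς 0) (Finset.sum_le_sum hterm)
      _ = ς * (1 + (M : ℝ) + ((p : ℝ) + 1) * B) := by
          rw [Finset.sum_add_distrib, Finset.sum_const, ← Finset.sum_mul, hBsum]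
          simp [Finset.card_range]
          ring
  have hM_le : (M : ℝ) ≤ (n : ℝ) ^ a := by
    rw [hMdef, Nat.cast_max]
    exact max_le hk_le hkt
  have hfinal : |nnFunSeq p kt βt γt x - nnFunSeq p k β γ x| ≤ 5 * (n : ℝ) ^ a * ς := by
    calc |nnFunSeq p kt βt γt x - nnFunSeq p k β γ x|
        ≤ ς * (1 + (M : ℝ) + ((p : ℝ) + 1) * B) := habs
      _ ≤ ς * ((n : ℝ) ^ a + (n : ℝ) ^ a + (n : ℝ) ^ a) := by
          apply mul_le_mul_of_nonneg_left ?_ (le_of_lt hς)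
          have h1 : 1 ≤ (n : ℝ) ^ a := by nlinarith
          linarith
      _ ≤ 5 * (n : ℝ) ^ a * ς := by nlinarith
  calc (nnFunSeq p kt βt γt x - nnFunSeq p k β γ x) ^ 2
      = |nnFunSeq p kt βt γt x - nnFunSeq p k β γ x| ^ 2 := (sq_abs _).symm
    _ ≤ (5 * (n : ℝ) ^ a * ς) ^ 2 := by
        apply pow_le_pow_left₀ (abs_nonneg _) hfinal
    _ = (5 * (n : ℝ) ^ a) ^ 2 * ς ^ 2 := by ring

end
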